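/- For all integers n ≥ 1 and 0 ≤ m ≤ n−1, g_n(m,m+1) = C(n−1,m); that is, the smallest k for which there exists a cutset in 2^{[n]} consisting of exactly k subsets of size m and exactly k subsets of size m+1 (and no subsets of any other size) is C(n−1,m). -/

import Mathlib

open Finset
open scoped FinsetFamily
attribute [-instance] instDecidableEqFin

/-- A maximal chain in the Boolean lattice of subsets of `[n] = {1, …, n}`:
`∅ = c 0 ⊂ c 1 ⊂ ⋯ ⊂ c n = [n]` with `|c i| = i`. -/
def IsMaxChainIn (n : ℕ) (c : ℕ → Finset ℕ) : Prop :=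
  (∀ i ≤ n, (c i).card = i) ∧ (∀ i < n, c i ⊆ c (i + 1)) ∧ c n = Finset.Icc 1 n

/-- A cutset in `2^{[n]}`: a collection of subsets of `[n]` meeting every maximal chain. -/
def IsCutsetIn (n : ℕ) (C : Finset (Finset ℕ)) : Prop :=
  (∀ A ∈ C, A ⊆ Finset.Icc 1 n) ∧
    ∀ c : ℕ → Finset ℕ, IsMaxChainIn n c → ∃ i ≤ n, c i ∈ C

/-- `gcut n m l`: the smallest `k` such that there is a cutset in `2^{[n]}` containing
exactly `k` subsets of size `i` for each `m ≤ i ≤ l` and no subsets of any other size. -/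
noncomputable def gcut (n m l : ℕ) : ℕ :=
  sInf {k : ℕ | ∃ C : Finset (Finset ℕ), IsCutsetIn n C ∧
    (∀ A ∈ C, m ≤ A.card ∧ A.card ≤ l) ∧
    ∀ i : ℕ, m ≤ i → i ≤ l → (C.filter fun A => A.card = i).card = k}


lemma chain_mono {n : ℕ} {c : ℕ → Finset ℕ} (h : IsMaxChainIn n c) :
    ∀ i j, i ≤ j → j ≤ n → c i ⊆ c j := by
  intro i j hij hjn
  induction j with
  | zero => simpa [Nat.le_zero.mp hij] using Finset.Subset.refl _
  | succ j ih =>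
    rcases Nat.lt_or_ge i (j+1) with hlt | hge
    · exact (ih (Nat.lt_succ_iff.mp hlt) (le_trans (Nat.le_succ _) hjn)).trans
        (h.2.1 j (lt_of_lt_of_le (Nat.lt_succ_self _) hjn))
    · have : i = j + 1 := le_antisymm hij hge
      subst this; exact Finset.Subset.refl _

lemma chain_of_list (n : ℕ) (l : List ℕ) (hnd : l.Nodup) (hfin : l.toFinset = Finset.Icc 1 n) :
    IsMaxChainIn n (fun i => (l.take i).toFinset) := by
  have hlen : l.length = n := by
    have h1 := List.toFinset_card_of_nodup hnd
    rw [hfin, Nat.card_Icc] at h1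
    omega
  refine ⟨?_, ?_, ?_⟩
  · intro i hi
    rw [List.toFinset_card_of_nodup (hnd.sublist (List.take_sublist _ _)),
      List.length_take, hlen]
    omega
  · intro i _
    intro x hx
    rw [List.mem_toFinset] at *
    have : l.take i = (l.take (i+1)).take i := by
      rw [List.take_take]; congr 1; omega
    rw [this] at hx
    exact List.take_subset _ _ hx
  · simp only []
    rw [List.take_of_length_le hlen.le, hfin]

lemma exists_chain_flag {n m : ℕ} {X Y : Finset ℕ} (hXY : X ⊆ Y) (hY : Y ⊆ Finset.Icc 1 n)
    (hX : X.card = m) (hYc : Y.card = m + 1) :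
    ∃ c, IsMaxChainIn n c ∧ c m = X ∧ c (m+1) = Y := by
  classical
  set l : List ℕ := X.toList ++ ((Y \ X).toList ++ (Finset.Icc 1 n \ Y).toList) with hl
  have hdXY : ∀ x ∈ X.toList, x ∉ (Y \ X).toList := by
    intro x hx hx'
    rw [Finset.mem_toList] at hx hx'
    exact (Finset.mem_sdiff.mp hx').2 hx
  have hdXI : ∀ x ∈ X.toList, x ∉ (Finset.Icc 1 n \ Y).toList := by
    intro x hx hx'
    rw [Finset.mem_toList] at hx hx'
    exact (Finset.mem_sdiff.mp hx').2 (hXY hx)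
  have hdYI : ∀ x ∈ (Y \ X).toList, x ∉ (Finset.Icc 1 n \ Y).toList := by
    intro x hx hx'
    rw [Finset.mem_toList] at hx hx'
    exact (Finset.mem_sdiff.mp hx').2 (Finset.mem_sdiff.mp hx).1
  have hnd : l.Nodup := by
    rw [hl, List.nodup_append, List.nodup_append]
    refine ⟨Finset.nodup_toList _, ⟨Finset.nodup_toList _, Finset.nodup_toList _, fun a ha b hb hab => hdYI a ha (hab ▸ hb)⟩, ?_⟩
    intro x hx _ hx' rfl
    rcases List.mem_append.mp hx' with h | h
    · exact hdXY x hx h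
    · exact hdXI x hx h
  have hfin : l.toFinset = Finset.Icc 1 n := by
    rw [hl, List.toFinset_append, List.toFinset_append]
    simp only [Finset.toList_toFinset]
    rw [← Finset.union_assoc, Finset.union_sdiff_of_subset hXY,
      Finset.union_sdiff_of_subset hY]
  have hXlen : X.toList.length = m := by rw [Finset.length_toList, hX]
  have hYXlen : (Y \ X).toList.length = 1 := by
    rw [Finset.length_toList, Finset.card_sdiff_of_subset hXY, hX, hYc]; omega
  refine ⟨fun i => (l.take i).toFinset, chain_of_list n l hnd hfin, ?_, ?_⟩
  · show (l.take m).toFinset = X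
    rw [hl, ← hXlen, List.take_left, Finset.toList_toFinset]
  · show (l.take (m+1)).toFinset = Y
    rw [hl, ← List.append_assoc]
    have h2 : (X.toList ++ (Y \ X).toList).length = m + 1 := by
      rw [List.length_append, hXlen, hYXlen]
    rw [← h2, List.take_left, List.toFinset_append]
    simp only [Finset.toList_toFinset]
    exact Finset.union_sdiff_of_subset hXY

lemma upper_bound (n m : ℕ) (hn : 1 ≤ n) (hmn : m ≤ n - 1) :
    ∃ C : Finset (Finset ℕ), IsCutsetIn n C ∧
    (∀ A ∈ C, m ≤ A.card ∧ A.card ≤ m + 1) ∧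
    ∀ i : ℕ, m ≤ i → i ≤ m + 1 →
      (C.filter fun A => A.card = i).card = (n - 1).choose m := by
  classical
  have hnmem : n ∉ Finset.Icc 1 (n - 1) := by simp [Finset.mem_Icc]; omega
  set P1 : Finset (Finset ℕ) := Finset.powersetCard m (Finset.Icc 1 (n-1)) with hP1
  set P2 : Finset (Finset ℕ) := P1.image (insert n) with hP2
  have hP1mem : ∀ A ∈ P1, A ⊆ Finset.Icc 1 (n-1) ∧ A.card = m := by
    intro A hA; exact Finset.mem_powersetCard.mp hA
  have hP2card : ∀ B ∈ P2, B.card = m + 1 := by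
    intro B hB
    rcases Finset.mem_image.mp hB with ⟨A, hA, rfl⟩
    obtain ⟨hAs, hAc⟩ := hP1mem A hA
    rw [Finset.card_insert_of_notMem (fun hc => hnmem (hAs hc)), hAc]
  have hsub1 : Finset.Icc 1 (n-1) ⊆ Finset.Icc 1 n := by
    intro x hx; rw [Finset.mem_Icc] at *; omega
  refine ⟨P1 ∪ P2, ⟨?_, ?_⟩, ?_, ?_⟩
  · intro A hA
    rcases Finset.mem_union.mp hA with h | h
    · exact (hP1mem A h).1.trans hsub1
    · rcases Finset.mem_image.mp h with ⟨A', hA', rfl⟩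
      apply Finset.insert_subset (by rw [Finset.mem_Icc]; omega)
      exact (hP1mem A' hA').1.trans hsub1
  · intro c hc
    have hm1n : m + 1 ≤ n := by omega
    have hcm : c m ⊆ Finset.Icc 1 n := by
      rw [← hc.2.2]; exact chain_mono hc m n (by omega) le_rfl
    by_cases hnc : n ∈ c m
    · refine ⟨m + 1, hm1n, Finset.mem_union_right _ ?_⟩
      have hncm1 : n ∈ c (m+1) := chain_mono hc m (m+1) (Nat.le_succ _) hm1n hnc
      have hsub : c (m+1) ⊆ Finset.Icc 1 n := by
        rw [← hc.2.2]; exact chain_mono hc (m+1) n hm1n le_rfl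
      refine Finset.mem_image.mpr ⟨(c (m+1)).erase n, ?_, Finset.insert_erase hncm1⟩
      rw [hP1, Finset.mem_powersetCard]
      constructor
      · intro x hx
        have hx1 := hsub (Finset.erase_subset _ _ hx)
        have hx2 := Finset.ne_of_mem_erase hx
        rw [Finset.mem_Icc] at *; omega
      · rw [Finset.card_erase_of_mem hncm1, hc.1 (m+1) hm1n]; omega
    · refine ⟨m, by omega, Finset.mem_union_left _ ?_⟩
      rw [hP1, Finset.mem_powersetCard]
      refine ⟨?_, hc.1 m (by omega)⟩
      intro x hx
      have hx1 := hcm hx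
      have hx2 : x ≠ n := fun h => hnc (h ▸ hx)
      rw [Finset.mem_Icc] at *; omega
  · intro A hA
    rcases Finset.mem_union.mp hA with h | h
    · rw [(hP1mem A h).2]; omega
    · rw [hP2card A h]; omega
  · have hcard1 : P1.card = (n-1).choose m := by
      have : n - 1 + 1 - 1 = n - 1 := by omega
      rw [hP1, Finset.card_powersetCard, Nat.card_Icc, this]
    have hinj : Set.InjOn (insert n) (P1 : Set (Finset ℕ)) := by
      intro A hA B hB hAB
      rw [Finset.mem_coe] at hA hB
      have hA' : n ∉ A := fun hc => hnmem ((hP1mem A hA).1 hc)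
      have hB' : n ∉ B := fun hc => hnmem ((hP1mem B hB).1 hc)
      have : (insert n A).erase n = (insert n B).erase n := by rw [hAB]
      rwa [Finset.erase_insert hA', Finset.erase_insert hB'] at this
    have hcard2 : P2.card = (n-1).choose m := by
      rw [hP2, Finset.card_image_of_injOn hinj, hcard1]
    intro i him hi
    have hdisj1 : P1.filter (fun A => A.card = (m+1)) = ∅ := by
      apply Finset.filter_false_of_mem
      intro A hA h; rw [(hP1mem A hA).2] at h; omega
    have hdisj2 : P2.filter (fun A => A.card = m) = ∅ := by
      apply Finset.filter_false_of_mem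
      intro A hA h; rw [hP2card A hA] at h; omega
    have hfull1 : P1.filter (fun A => A.card = m) = P1 :=
      Finset.filter_true_of_mem (fun A hA => (hP1mem A hA).2)
    have hfull2 : P2.filter (fun A => A.card = (m+1)) = P2 :=
      Finset.filter_true_of_mem hP2card
    rcases (by omega : i = m ∨ i = m + 1) with rfl | rfl
    · rw [Finset.filter_union, hfull1, hdisj2, Finset.union_empty, hcard1]
    · rw [Finset.filter_union, hdisj1, hfull2, Finset.empty_union, hcard2]

def piFin (n : ℕ) (A : Finset ℕ) : Finset (Fin n) :=
  Finset.univ.filter (fun i : Fin n => (i : ℕ) + 1 ∈ A)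

lemma mem_piFin {n : ℕ} {A : Finset ℕ} {i : Fin n} : i ∈ piFin n A ↔ (i : ℕ) + 1 ∈ A := by
  simp [piFin]

lemma image_piFin {n : ℕ} {A : Finset ℕ} (hA : A ⊆ Finset.Icc 1 n) :
    (piFin n A).image (fun i : Fin n => (i : ℕ) + 1) = A := by
  ext x
  simp only [Finset.mem_image, mem_piFin]
  constructor
  · rintro ⟨i, hi, rfl⟩; exact hi
  · intro hx
    have hx' := hA hx; rw [Finset.mem_Icc] at hx'
    have hx1 : x - 1 + 1 = x := by omega
    exact ⟨⟨x - 1, by omega⟩, by simpa [hx1] using hx, hx1⟩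

lemma card_piFin {n : ℕ} {A : Finset ℕ} (hA : A ⊆ Finset.Icc 1 n) :
    (piFin n A).card = A.card := by
  have h2 := Finset.card_image_of_injective (piFin n A)
    (fun i j h => Fin.ext (Nat.succ_injective h) : Function.Injective (fun i : Fin n => (i:ℕ)+1))
  rw [image_piFin hA] at h2; exact h2.symm

lemma piFin_inj {n : ℕ} {A B : Finset ℕ} (hA : A ⊆ Finset.Icc 1 n) (hB : B ⊆ Finset.Icc 1 n)
    (h : piFin n A = piFin n B) : A = B := by
  rw [← image_piFin hA, ← image_piFin hB, h]

lemma piFin_insert {n : ℕ} {A : Finset ℕ} (j : Fin n) :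
    piFin n (insert ((j : ℕ) + 1) A) = insert j (piFin n A) := by
  ext i
  simp only [mem_piFin, Finset.mem_insert]
  constructor
  · rintro (h | h)
    · exact Or.inl (Fin.ext (by omega))
    · exact Or.inr h
  · rintro (rfl | h)
    · exact Or.inl rfl
    · exact Or.inr h

lemma lower_bound (n m k : ℕ) (hn : 1 ≤ n) (hmn : m ≤ n - 1)
    (C : Finset (Finset ℕ)) (hcut : IsCutsetIn n C)
    (hsz : ∀ A ∈ C, m ≤ A.card ∧ A.card ≤ m + 1)
    (hcnt : ∀ i : ℕ, m ≤ i → i ≤ m + 1 → (C.filter fun A => A.card = i).card = k) :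
    (n - 1).choose m ≤ k := by
  classical
  set 𝒜 : Finset (Finset ℕ) := C.filter (fun A => A.card = m) with h𝒜
  set ℬ : Finset (Finset ℕ) := C.filter (fun A => A.card = m + 1) with hℬ
  have h𝒜k : 𝒜.card = k := hcnt m le_rfl (by omega)
  have hℬk : ℬ.card = k := hcnt (m+1) (by omega) le_rfl
  -- the cover property
  have hcover : ∀ X : Finset ℕ, X ⊆ Finset.Icc 1 n → X.card = m →
      ∀ y ∈ Finset.Icc 1 n, y ∉ X → X ∈ 𝒜 ∨ insert y X ∈ ℬ := by
    intro X hXsub hXc y hy hyX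
    have hY : insert y X ⊆ Finset.Icc 1 n := Finset.insert_subset hy hXsub
    have hYc : (insert y X).card = m + 1 := by
      rw [Finset.card_insert_of_notMem hyX, hXc]
    obtain ⟨c, hc, hcm, hcm1⟩ := exists_chain_flag (Finset.subset_insert y X) hY hXc hYc
    obtain ⟨i, hin, hci⟩ := hcut.2 c hc
    have hcic : (c i).card = i := hc.1 i hin
    obtain ⟨h1, h2⟩ := hsz _ hci
    rw [hcic] at h1 h2
    rcases (by omega : i = m ∨ i = m + 1) with rfl | rfl
    · rw [hcm] at hci
      exact Or.inl (Finset.mem_filter.mpr ⟨hci, hXc⟩)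
    · rw [hcm1] at hci
      exact Or.inr (Finset.mem_filter.mpr ⟨hci, hYc⟩)
  rcases Nat.eq_zero_or_pos m with rfl | hm
  · -- m = 0 case : k ≥ 1
    rw [Nat.choose_zero_right]
    by_contra hk
    have hk0 : k = 0 := by omega
    have h1n : (1:ℕ) ∈ Finset.Icc 1 n := by rw [Finset.mem_Icc]; omega
    rcases hcover ∅ (Finset.empty_subset _) Finset.card_empty 1 h1n (Finset.notMem_empty 1)
      with h | h
    · rw [Finset.card_eq_zero.mp (h𝒜k.trans hk0)] at h; exact Finset.notMem_empty _ h
    · rw [Finset.card_eq_zero.mp (hℬk.trans hk0)] at h; exact Finset.notMem_empty _ h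
  -- m ≥ 1 case
  by_contra hk
  push_neg at hk
  have h𝒜sub : 𝒜 ⊆ Finset.powersetCard m (Finset.Icc 1 n) := by
    intro A hA
    rw [Finset.mem_powersetCard]
    exact ⟨hcut.1 A (Finset.mem_filter.mp hA).1, (Finset.mem_filter.mp hA).2⟩
  set 𝒜' : Finset (Finset ℕ) := Finset.powersetCard m (Finset.Icc 1 n) \ 𝒜 with h𝒜'
  have h𝒜'sub : ∀ A ∈ 𝒜', A ⊆ Finset.Icc 1 n ∧ A.card = m ∧ A ∉ 𝒜 := by
    intro A hA
    rw [h𝒜', Finset.mem_sdiff, Finset.mem_powersetCard] at hA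
    exact ⟨hA.1.1, hA.1.2, hA.2⟩
  have h𝒜'card : 𝒜'.card = n.choose m - k := by
    rw [h𝒜', Finset.card_sdiff_of_subset h𝒜sub, Finset.card_powersetCard, Nat.card_Icc, h𝒜k]
    norm_num
  -- transfer to Fin n, complemented
  set φ : Finset ℕ → Finset (Fin n) := fun A => Finset.univ \ piFin n A with hφ
  have hφinj : ∀ A B : Finset ℕ, A ⊆ Finset.Icc 1 n → B ⊆ Finset.Icc 1 n →
      φ A = φ B → A = B := by
    intro A B hA hB h
    apply piFin_inj hA hB
    apply compl_injective (α := Finset (Fin n))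
    simpa [hφ, Finset.compl_eq_univ_sdiff] using h
  set F : Finset (Finset (Fin n)) := 𝒜'.image φ with hF
  have hFsized : (F : Set (Finset (Fin n))).Sized (n - m) := by
    intro B hB
    rw [hF, Finset.coe_image] at hB
    obtain ⟨A, hA, rfl⟩ := hB
    rw [Finset.mem_coe] at hA
    obtain ⟨hA1, hA2, _⟩ := h𝒜'sub A hA
    rw [hφ]
    simp only []
    rw [Finset.card_sdiff_of_subset (Finset.subset_univ _), Finset.card_univ, Fintype.card_fin,
      card_piFin hA1, hA2]
  have hFcard : F.card = 𝒜'.card := by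
    rw [hF]
    apply Finset.card_image_of_injOn
    intro A hA B hB h
    rw [Finset.mem_coe] at hA hB
    exact hφinj A B (h𝒜'sub A hA).1 (h𝒜'sub B hB).1 h
  -- shadow of F lands in image of ℬ
  have hshadow : ∂ F ⊆ ℬ.image φ := by
    intro B hB
    rw [Finset.mem_shadow_iff] at hB
    obtain ⟨S, hS, j, hj, rfl⟩ := hB
    rw [hF, Finset.mem_image] at hS
    obtain ⟨A, hA, rfl⟩ := hS
    obtain ⟨hA1, hA2, hA3⟩ := h𝒜'sub A hA
    rw [hφ] at hj
    simp only [Finset.mem_sdiff, Finset.mem_univ, true_and] at hj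
    have hyn : (j : ℕ) + 1 ∈ Finset.Icc 1 n := by
      rw [Finset.mem_Icc]; have := j.2; omega
    have hyA : (j : ℕ) + 1 ∉ A := fun h => hj (mem_piFin.mpr h)
    have hins : insert ((j : ℕ) + 1) A ∈ ℬ := by
      rcases hcover A hA1 hA2 _ hyn hyA with h | h
      · exact absurd h hA3
      · exact h
    refine Finset.mem_image.mpr ⟨insert ((j : ℕ) + 1) A, hins, ?_⟩
    rw [hφ]
    simp only []
    rw [piFin_insert, Finset.sdiff_insert]
  -- apply Kruskal-Katona, Lovász form
  have hrk : n - m ≤ n - 1 := by omega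
  have hchoose1 : n.choose m = (n-1).choose (m-1) + (n-1).choose m := by
    obtain ⟨m', rfl⟩ : ∃ m', m = m' + 1 := ⟨m - 1, by omega⟩
    obtain ⟨n', rfl⟩ : ∃ n', n = n' + 1 := ⟨n - 1, by omega⟩
    simp [Nat.choose_succ_succ]
  have hchoose2 : (n-1).choose (n - m) = (n-1).choose (m - 1) := by
    rw [← Nat.choose_symm (by omega : m - 1 ≤ n - 1)]
    congr 1; omega
  have h₂ : (n-1).choose (n - m) ≤ F.card := by
    rw [hFcard, h𝒜'card, hchoose2]
    have := Nat.choose_le_choose m (by omega : n - 1 ≤ n)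
    omega
  have hKK := Finset.kruskal_katona_lovasz_form (i := 1) (r := n - m) (k := n - 1)
    (by omega) hrk (by omega) hFsized h₂
  rw [Function.iterate_one] at hKK
  have hchoose3 : (n-1).choose (n - m - 1) = (n-1).choose m := by
    rw [← Nat.choose_symm (by omega : n - m - 1 ≤ n - 1)]
    congr 1; omega
  have hBcard : (∂ F).card ≤ k := by
    calc (∂ F).card ≤ (ℬ.image φ).card := Finset.card_le_card hshadow
    _ ≤ ℬ.card := Finset.card_image_le
    _ = k := hℬk
  rw [hchoose3] at hKK
  omega


/-- For all integers `n ≥ 1` and `0 ≤ m ≤ n-1`, `g_n(m,m+1) = C(n-1,m)`. -/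
theorem gcut_succ (n m : ℕ) (hn : 1 ≤ n) (hmn : m ≤ n - 1) :
    gcut n m (m + 1) = (n - 1).choose m := by
  have hmem : (n - 1).choose m ∈ {k : ℕ | ∃ C : Finset (Finset ℕ), IsCutsetIn n C ∧
      (∀ A ∈ C, m ≤ A.card ∧ A.card ≤ m + 1) ∧
      ∀ i : ℕ, m ≤ i → i ≤ m + 1 → (C.filter fun A => A.card = i).card = (n - 1).choose m} :=
    upper_bound n m hn hmn
  refine le_antisymm (Nat.sInf_le hmem) (le_csInf ⟨_, hmem⟩ ?_)
  rintro k ⟨C, h1, h2, h3⟩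
  exact lower_bound n m k hn hmn C h1 h2 h3
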